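/- Let X, Y be n-tuples of nonempty subsets of N and define f : B^n → B^n by f(u) = ⋁_{a : χ_Y(a) ≤ u} χ_X(a). Then Sec(X) ⊆ Sec(Y) if and only if |f(u)| ≤ |u| for all u ∈ B^n. -/
import Mathlib


open scoped Classical

/-- Characteristic vector of `a` along the tuple `Z`. -/
noncomputable def chi {N : Type*} {n : ℕ} (Z : Fin n → Set N) (a : N) : Fin n → Bool :=
  fun i => decide (a ∈ Z i)

/-- Weight: number of `true` coordinates. -/
def wt {n : ℕ} (u : Fin n → Bool) : ℕ :=
  (Finset.univ.filter fun i => u i = true).card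

/-- The set of unordered sections of the tuple `X`. -/
def Sec {N : Type*} {n : ℕ} (X : Fin n → Set N) : Set (Multiset N) :=
  { m | ∃ a : Fin n → N, ∃ σ : Equiv.Perm (Fin n),
      (∀ i, a i ∈ X (σ i)) ∧ m = (List.ofFn a : Multiset N) }

/-- Lift of a boolean function to tuples of sets. -/
noncomputable def liftFn {N : Type*} {n m : ℕ}
    (f : (Fin n → Bool) → (Fin m → Bool)) (Y : Fin n → Set N) : Fin m → Set N :=
  fun i => { a | f (chi Y a) i = true }

private lemma ofFn_comp_perm {N : Type*} {n : ℕ} (a : Fin n → N) (σ : Equiv.Perm (Fin n)) :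
    ((List.ofFn (a ∘ σ) : Multiset N)) = (List.ofFn a : Multiset N) := by
  rw [← Fin.univ_val_map, ← Fin.univ_val_map, ← Multiset.map_map,
    Multiset.map_univ_val_equiv]

private lemma mem_Sec_iff {N : Type*} {n : ℕ} (X : Fin n → Set N) (m : Multiset N) :
    m ∈ Sec X ↔ ∃ b : Fin n → N, (∀ i, b i ∈ X i) ∧ m = (List.ofFn b : Multiset N) := by
  constructor
  · rintro ⟨a, σ, h, rfl⟩
    refine ⟨a ∘ σ.symm, fun i => ?_, (ofFn_comp_perm a σ.symm).symm⟩
    simpa using h (σ.symm i)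
  · rintro ⟨b, h, rfl⟩
    exact ⟨b, 1, fun i => h i, rfl⟩

private lemma countP_ofFn' {N : Type*} {n : ℕ} (b : Fin n → N) (p : N → Prop)
    [DecidablePred p] :
    Multiset.countP p (List.ofFn b : Multiset N) =
      (Finset.univ.filter fun i => p (b i)).card := by
  rw [← Fin.univ_val_map, Multiset.countP_map]
  rfl

theorem stmt5 {N : Type*} {n : ℕ} (X Y : Fin n → Set N)
    (hX : ∀ i, (X i).Nonempty) (hY : ∀ i, (Y i).Nonempty)
    (f : (Fin n → Bool) → (Fin n → Bool))
    (hf : ∀ u i, f u i = true ↔ ∃ a : N, chi Y a ≤ u ∧ chi X a i = true) :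
    Sec X ⊆ Sec Y ↔ ∀ u : Fin n → Bool, wt (f u) ≤ wt u := by
  constructor
  · -- Sec X ⊆ Sec Y → weight condition
    intro hsub u
    -- choose witnesses
    have hb : ∀ i : Fin n, ∃ x : N, x ∈ X i ∧ (f u i = true → chi Y x ≤ u) := by
      intro i
      by_cases h : f u i = true
      · obtain ⟨a, ha1, ha2⟩ := (hf u i).mp h
        exact ⟨a, by simpa [chi] using ha2, fun _ => ha1⟩
      · obtain ⟨x, hx⟩ := hX i
        exact ⟨x, hx, fun hc => absurd hc h⟩
    choose b hbX hbY using hb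
    have hm : (List.ofFn b : Multiset N) ∈ Sec Y :=
      hsub ((mem_Sec_iff X _).mpr ⟨b, hbX, rfl⟩)
    obtain ⟨c, hcY, hbc⟩ := (mem_Sec_iff Y _).mp hm
    set p : N → Prop := fun x => chi Y x ≤ u with hp
    have h1 : wt (f u) ≤ Multiset.countP p (List.ofFn b : Multiset N) := by
      rw [countP_ofFn' b p]
      apply Finset.card_le_card
      intro i hi
      simp only [Finset.mem_filter, Finset.mem_univ, true_and] at hi ⊢
      exact hbY i hi
    have h2 : Multiset.countP p (List.ofFn c : Multiset N) ≤ wt u := by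
      rw [countP_ofFn' c p]
      apply Finset.card_le_card
      intro j hj
      simp only [Finset.mem_filter, Finset.mem_univ, true_and] at hj ⊢
      have : chi Y (c j) j ≤ u j := hj j
      have hYj : chi Y (c j) j = true := by simp [chi, hcY j]
      rw [hYj] at this
      exact Bool.le_iff_imp.mp this rfl
    calc wt (f u) ≤ Multiset.countP p (List.ofFn b : Multiset N) := h1
      _ = Multiset.countP p (List.ofFn c : Multiset N) := by rw [← hbc]
      _ ≤ wt u := h2
  · -- weight condition → Sec X ⊆ Sec Y
    intro hw m hm
    obtain ⟨b, hbX, rfl⟩ := (mem_Sec_iff X m).mp hm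
    set t : Fin n → Finset (Fin n) := fun j => Finset.univ.filter fun i => b i ∈ Y j with ht
    have hall : ∀ s : Finset (Fin n), s.card ≤ (s.biUnion t).card := by
      intro s
      set u : Fin n → Bool := fun j => decide (j ∉ s) with hu
      have hsub : (s.biUnion t)ᶜ ⊆ Finset.univ.filter fun i => f u i = true := by
        intro i hi
        simp only [Finset.mem_compl, Finset.mem_biUnion, ht, Finset.mem_filter,
          Finset.mem_univ, true_and, not_exists, not_and] at hi
        simp only [Finset.mem_filter, Finset.mem_univ, true_and]
        refine (hf u i).mpr ⟨b i, fun j => ?_, by simp [chi, hbX i]⟩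
        by_cases hbY : b i ∈ Y j
        · have : j ∉ s := fun hjs => hi j hjs hbY
          simp [hu, chi, this]
        · simp [chi, hbY]
      have h1 : ((s.biUnion t)ᶜ).card ≤ wt u := le_trans (Finset.card_le_card hsub) (hw u)
      have h2 : wt u = sᶜ.card := by
        unfold wt
        congr 1
        ext j
        simp [hu]
      have h3 : ((s.biUnion t)ᶜ).card = Fintype.card (Fin n) - (s.biUnion t).card :=
        Finset.card_compl _
      have h4 : sᶜ.card = Fintype.card (Fin n) - s.card := Finset.card_compl _
      have h5 : s.card ≤ Fintype.card (Fin n) := Finset.card_le_univ s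
      have h6 : (s.biUnion t).card ≤ Fintype.card (Fin n) := Finset.card_le_univ _
      omega
    obtain ⟨τ, hτinj, hτ⟩ := (Finset.all_card_le_biUnion_card_iff_exists_injective t).mp hall
    have hτbij : Function.Bijective τ := (Finite.injective_iff_bijective).mp hτinj
    let e := Equiv.ofBijective τ hτbij
    refine ⟨b, e.symm, fun i => ?_, rfl⟩
    have := hτ (e.symm i)
    simp only [ht, Finset.mem_filter, Finset.mem_univ, true_and] at this
    have he : τ (e.symm i) = i := e.apply_symm_apply i
    rwa [he] at this
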